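/- Let A be a Γ-graded ring, γ̄ ∈ Γ^n, and e_{ii}, e_{jj} standard diagonal matrix units in M_n(A)(γ̄). Then e_{ii} M_n(A)(γ̄) ≅_gr e_{jj} M_n(A)(γ̄) as graded right modules if and only if γ_i − γ_j ∈ Γ_A, where Γ_A = { γ ∈ Γ | A_γ ≠ 0 } is the support of A (assumed here that A is a graded division ring so Γ_A is a subgroup). -/

import Mathlib

open Matrix DirectSum

lemma inv_mem_neg {Γ : Type*} [AddCommGroup Γ] [DecidableEq Γ]
    {A : Type*} [Ring A] (𝒜 : Γ → AddSubgroup A) [GradedRing 𝒜]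
    {a : A} {γ : Γ} (ha : a ∈ 𝒜 γ) (hu : IsUnit a) :
    (↑hu.unit⁻¹ : A) ∈ 𝒜 (-γ) := by
  set b : A := ↑hu.unit⁻¹ with hb
  have hab : a * b = 1 := hu.mul_val_inv
  have hba : b * a = 1 := hu.val_inv_mul
  have key : (DirectSum.decompose 𝒜 (a * b) (γ + -γ) : A)
      = a * (DirectSum.decompose 𝒜 b (-γ) : A) :=
    DirectSum.coe_decompose_mul_add_of_left_mem 𝒜 ha
  rw [hab, add_neg_cancel,
    DirectSum.decompose_of_mem_same 𝒜 (SetLike.one_mem_graded 𝒜)] at key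
  have hbc : b = (DirectSum.decompose 𝒜 b (-γ) : A) := by
    calc b = b * (a * (DirectSum.decompose 𝒜 b (-γ) : A)) := by rw [← key, mul_one]
    _ = (b * a) * (DirectSum.decompose 𝒜 b (-γ) : A) := by rw [mul_assoc]
    _ = (DirectSum.decompose 𝒜 b (-γ) : A) := by rw [hba, one_mul]
  rw [hbc]
  exact SetLike.coe_mem _


/-- The degree-`δ` component of the graded matrix ring `Mₙ(A)(γ₁,…,γₙ)`: matrices `(a_{ij})`
with `a_{ij} ∈ 𝒜 (δ + γ_j - γ_i)`. -/
def matGrading {Γ : Type*} [AddCommGroup Γ] {A : Type*} [Ring A]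
    (𝒜 : Γ → AddSubgroup A) {n : ℕ} (γs : Fin n → Γ) (δ : Γ) :
    AddSubgroup (Matrix (Fin n) (Fin n) A) where
  carrier := {M | ∀ i j, M i j ∈ 𝒜 (δ + γs j - γs i)}
  add_mem' := by
    intro M N hM hN i j
    rw [Matrix.add_apply]
    exact add_mem (hM i j) (hN i j)
  zero_mem' := by
    intro i j
    rw [Matrix.zero_apply]
    exact zero_mem _
  neg_mem' := by
    intro M hM i j
    rw [Matrix.neg_apply]
    exact neg_mem (hM i j)

/-- Let `A` be a `Γ`-graded division ring (every nonzero homogeneous element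
is invertible), `γ̄ ∈ Γⁿ`, and `e_{ii}, e_{jj}` standard diagonal matrix units of `Mₙ(A)(γ̄)`.
Then `e_{ii} Mₙ(A)(γ̄) ≅_gr e_{jj} Mₙ(A)(γ̄)` as graded right `Mₙ(A)(γ̄)`-modules (an additive,
right-module-linear, degree-preserving bijection exists) if and only if `γ_i - γ_j ∈ Γ_A`,
i.e. `𝒜 (γ_i - γ_j) ≠ ⊥`. -/
theorem stmt_6 {Γ : Type*} [AddCommGroup Γ] [DecidableEq Γ]
    {A : Type*} [Ring A] [Nontrivial A]
    (𝒜 : Γ → AddSubgroup A) [GradedRing 𝒜]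
    (hdiv : ∀ a : A, a ≠ 0 → (∃ γ, a ∈ 𝒜 γ) → IsUnit a)
    {n : ℕ} (γs : Fin n → Γ) (i j : Fin n) :
    (∃ f : Matrix (Fin n) (Fin n) A → Matrix (Fin n) (Fin n) A,
      Set.BijOn f {M | Matrix.single i i 1 * M = M}
        {M | Matrix.single j j 1 * M = M} ∧
      (∀ M N : Matrix (Fin n) (Fin n) A, Matrix.single i i 1 * M = M →
        Matrix.single i i 1 * N = N → f (M + N) = f M + f N) ∧
      (∀ (M r : Matrix (Fin n) (Fin n) A), Matrix.single i i 1 * M = M →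
        f (M * r) = f M * r) ∧
      (∀ (d : Γ) (M : Matrix (Fin n) (Fin n) A), Matrix.single i i 1 * M = M →
        (M ∈ matGrading 𝒜 γs d ↔ f M ∈ matGrading 𝒜 γs d))) ↔
    𝒜 (γs i - γs j) ≠ ⊥ := by
  constructor
  · rintro ⟨f, hbij, hadd, hlin, hdeg⟩ hbot
    have hEset : Matrix.single i i 1 * Matrix.single i i (1 : A)
        = Matrix.single i i 1 := by
      rw [Matrix.single_mul_single_same, one_mul]
    have hE0 : Matrix.single i i (1 : A) ∈ matGrading 𝒜 γs 0 := by
      intro k l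
      by_cases hk : i = k ∧ i = l
      · obtain ⟨hk1, hk2⟩ := hk
        rw [← hk1, ← hk2]
        simpa [Matrix.single] using SetLike.one_mem_graded 𝒜
      · simp only [Matrix.single, Matrix.of_apply, hk, if_false]
        exact zero_mem _
    have hfE0 : f (Matrix.single i i 1) ∈ matGrading 𝒜 γs 0 :=
      (hdeg 0 _ hEset).1 hE0
    have hrow : Matrix.single j j 1 * f (Matrix.single i i 1)
        = f (Matrix.single i i 1) := hbij.1 hEset
    have hcol : f (Matrix.single i i 1) * Matrix.single i i 1
        = f (Matrix.single i i 1) := by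
      have h := hlin (Matrix.single i i 1) (Matrix.single i i 1) hEset
      rw [hEset] at h
      exact h.symm
    have hfEzero : f (Matrix.single i i 1) = 0 := by
      ext k l
      rw [Matrix.zero_apply]
      by_cases hk : k = j
      · by_cases hl : l = i
        · have hmem := hfE0 j i
          rw [zero_add, hbot, AddSubgroup.mem_bot] at hmem
          rw [hk, hl]
          exact hmem
        · rw [← hcol, Matrix.mul_single_apply_of_ne (hbj := hl)]
      · rw [← hrow, Matrix.single_mul_apply_of_ne (h := hk)]
    have hf0 : f 0 = 0 := by
      have h := hadd 0 0 (by simp) (by simp)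
      rw [add_zero] at h
      exact (left_eq_add.mp h)
    have hEzero : Matrix.single i i (1 : A) = 0 :=
      hbij.2.1 hEset (by simp) (by rw [hfEzero, hf0])
    have := congrFun (congrFun hEzero i) i
    simp [Matrix.single] at this
  · intro hbot
    have hex : ∃ a ∈ 𝒜 (γs i - γs j), a ≠ 0 := by
      by_contra h
      push_neg at h
      exact hbot ((AddSubgroup.eq_bot_iff_forall _).mpr h)
    obtain ⟨a, hmem, ha⟩ := hex
    have hu : IsUnit a := hdiv a ha ⟨_, hmem⟩
    set b : A := ↑hu.unit⁻¹ with hbdef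
    have hab : a * b = 1 := hu.mul_val_inv
    have hba : b * a = 1 := hu.val_inv_mul
    have hbmem : b ∈ 𝒜 (γs j - γs i) := by
      have := inv_mem_neg 𝒜 hmem hu
      rwa [neg_sub] at this
    have hGF : Matrix.single i j b * Matrix.single j i a
        = Matrix.single i i 1 := by
      rw [Matrix.single_mul_single_same, hba]
    have hFG : Matrix.single j i a * Matrix.single i j b
        = Matrix.single j j 1 := by
      rw [Matrix.single_mul_single_same, hab]
    have hEF : Matrix.single j j 1 * Matrix.single j i a
        = Matrix.single j i a := by
      rw [Matrix.single_mul_single_same, one_mul]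
    have hEG : Matrix.single i i 1 * Matrix.single i j b
        = Matrix.single i j b := by
      rw [Matrix.single_mul_single_same, one_mul]
    refine ⟨fun M => Matrix.single j i a * M, ⟨?_, ?_, ?_⟩, ?_, ?_, ?_⟩
    · intro M hM
      show Matrix.single j j 1 * (Matrix.single j i a * M)
        = Matrix.single j i a * M
      rw [← mul_assoc, hEF]
    · intro M hM N hN hMN
      have hMN' : Matrix.single j i a * M = Matrix.single j i a * N := hMN
      have h2 : Matrix.single i j b * (Matrix.single j i a * M)
          = Matrix.single i j b * (Matrix.single j i a * N) := by
        rw [hMN']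
      rwa [← mul_assoc, ← mul_assoc, hGF, hM, hN] at h2
    · intro N hN
      refine ⟨Matrix.single i j b * N, ?_, ?_⟩
      · show Matrix.single i i 1 * (Matrix.single i j b * N)
          = Matrix.single i j b * N
        rw [← mul_assoc, hEG]
      · show Matrix.single j i a * (Matrix.single i j b * N) = N
        rw [← mul_assoc, hFG, hN]
    · intro M N _ _
      exact mul_add _ M N
    · intro M r _
      exact (mul_assoc _ M r).symm
    · intro d M hM
      constructor
      · intro hMd k l
        show (Matrix.single j i a * M) k l ∈ 𝒜 (d + γs l - γs k)
        by_cases hk : k = j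
        · rw [hk, Matrix.single_mul_apply_same,
            show d + γs l - γs j = (γs i - γs j) + (d + γs l - γs i) by abel]
          exact SetLike.mul_mem_graded hmem (hMd i l)
        · rw [Matrix.single_mul_apply_of_ne (h := hk)]
          exact zero_mem _
      · intro hFMd k l
        by_cases hk : k = i
        · have hMk : M k l = b * (Matrix.single j i a * M) j l := by
            conv_lhs => rw [← hM, ← hGF, mul_assoc]
            rw [hk, Matrix.single_mul_apply_same]
          rw [hMk,
            show d + γs l - γs k = (γs j - γs i) + (d + γs l - γs j) by rw [hk]; abel]
          exact SetLike.mul_mem_graded hbmem (hFMd j l)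
        · rw [← hM, Matrix.single_mul_apply_of_ne (h := hk)]
          exact zero_mem _
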